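/- Let n > 1 and let I_{2n} = {−n, −n+1, …, n−1}. Let Φ be the Feigin–Tsygan isomorphism gJ(R) → gl_{I_{2n}}(J(R)) determined by Φ(E_{m+2rn, m'+2sn}(a)) = e_{m,m'}(E_{r,s}(a)) for m,m' ∈ I_{2n}, r,s ∈ ℤ, a ∈ R. Define sp_J(R) = {X ∈ gJ(R) : τ_{−1}(X) = −X}, where τ_{−1}(X) = −J_{−1} ᵗ(X) J_{−1} with J_{−1} = Σ_{i∈ℤ} (−1)^i E_{i,−1−i}, and define sp_{2n}(J(R)) = {X ∈ gl_{I_{2n}}(J(R)) : X^† J_n^C + J_n^C X = 0}, where J_n^C = Σ_{i=−n}^{n−1} (−1)^i e_{i,−i−1} and X^† is the transpose of X with the anti-involution ∗ of J(R) (E_{k,l}(r)^∗ = E_{−l,−k}(r̄)) applied to each entry. Then Φ restricts to an isomorphism of Lie algebras sp_J(R) → sp_{2n}(J(R)). -/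

import Mathlib

/-!
STATEMENT 7: The Feigin–Tsygan isomorphism `Φ : gJ(R) → gl_{I_{2n}}(J(R))`,
`I_{2n} = {−n,…,n−1}`, `Φ(E_{m+2rn, m'+2sn}(a)) = e_{m,m'}(E_{r,s}(a))`,
restricts to an isomorphism of Lie algebras
`sp_J(R) = {X : τ_{−1}(X) = −X} → sp_{2n}(J(R)) = {A : A^† J_n^C + J_n^C A = 0}`.
-/

def HasBand {R : Type*} [Zero R] (A : ℤ → ℤ → R) (N : ℤ) : Prop :=
  ∀ i j : ℤ, N < |i - j| → A i j = 0

def IsJacobi {R : Type*} [Zero R] (A : ℤ → ℤ → R) : Prop := ∃ N : ℤ, HasBand A N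

noncomputable def jmul {R : Type*} [Ring R] (A B : ℤ → ℤ → R) : ℤ → ℤ → R :=
  fun i j => ∑ᶠ l : ℤ, A i l * B l j

noncomputable def lieB {R : Type*} [Ring R] (A B : ℤ → ℤ → R) : ℤ → ℤ → R :=
  jmul A B - jmul B A

def idMat {R : Type*} [Ring R] : ℤ → ℤ → R := fun i j => if i = j then 1 else 0

/-- `τ_{−1}(X) = −J_{−1} ᵗ(X) J_{−1}` where `J_{−1} = Σ_i (−1)^i E_{i,−1−i}`;
entrywise `τ_{−1}(X)_{i,j} = (−1)^{i+j} bar (X_{−1−j,−1−i})`. -/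
def tauC {R : Type*} [Ring R] (bar : R → R) (X : ℤ → ℤ → R) : ℤ → ℤ → R :=
  fun i j => ((i + j).negOnePow : ℤ) • bar (X (-1 - j) (-1 - i))

/-- The anti-involution `∗` of `J(R)`: `E_{k,l}(r)^∗ = E_{−l,−k}(r̄)`. -/
def astar {R : Type*} (bar : R → R) (X : ℤ → ℤ → R) : ℤ → ℤ → R :=
  fun i j => bar (X (-j) (-i))

/-- The index set `I_{2n} = {−n, …, n−1}`. -/
noncomputable def Isp (n : ℕ) : Finset ℤ := Finset.Icc (-(n : ℤ)) ((n : ℤ) - 1)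

/-- The restriction of the Feigin–Tsygan isomorphism:
`Φ(X)_{m,m'} (r,s) = X(m + 2rn, m' + 2sn)`. -/
def PhiSp {R : Type*} (n : ℕ) (X : ℤ → ℤ → R) :
    {i : ℤ // i ∈ Isp n} → {i : ℤ // i ∈ Isp n} → ℤ → ℤ → R :=
  fun m m' r s => X ((m : ℤ) + r * (2 * n)) ((m' : ℤ) + s * (2 * n))

/-- Multiplication of matrices indexed by `I_{2n}` with entries in `J(R)`. -/
noncomputable def matMulSp {R : Type*} [Ring R] (n : ℕ)
    (A B : {i : ℤ // i ∈ Isp n} → {i : ℤ // i ∈ Isp n} → ℤ → ℤ → R) :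
    {i : ℤ // i ∈ Isp n} → {i : ℤ // i ∈ Isp n} → ℤ → ℤ → R :=
  fun m m' => ∑ p : {i : ℤ // i ∈ Isp n}, jmul (A m p) (B p m')

/-- `A^†`: transpose with `∗` applied to each entry. -/
def daggerSp {R : Type*} (bar : R → R) (n : ℕ)
    (A : {i : ℤ // i ∈ Isp n} → {i : ℤ // i ∈ Isp n} → ℤ → ℤ → R) :
    {i : ℤ // i ∈ Isp n} → {i : ℤ // i ∈ Isp n} → ℤ → ℤ → R :=
  fun m m' => astar bar (A m' m)

/-- `J_n^C = Σ_{i=−n}^{n−1} (−1)^i e_{i,−i−1}` (entries in `J(R)`). -/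
def JnC {R : Type*} [Ring R] (n : ℕ) :
    {i : ℤ // i ∈ Isp n} → {i : ℤ // i ∈ Isp n} → ℤ → ℤ → R :=
  fun m m' => if (m' : ℤ) = -(m : ℤ) - 1 then ((m : ℤ).negOnePow : ℤ) • idMat else 0

-- ===== auxiliary development =====
namespace S7

def dm (n : ℕ) (i : ℤ) : ℤ := (i + n) % (2 * n) - n
def dr (n : ℕ) (i : ℤ) : ℤ := (i + n) / (2 * n)

lemma dm_mem {n : ℕ} (hn : 0 < n) (i : ℤ) : dm n i ∈ Isp n := by
  have h2 : (0 : ℤ) < 2 * n := by positivity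
  have h1 := Int.emod_nonneg (i + n) (by omega : (2 * (n : ℤ)) ≠ 0)
  have h2' := Int.emod_lt_of_pos (i + n) h2
  simp only [Isp, Finset.mem_Icc, dm]
  omega

lemma dm_dr (n : ℕ) (i : ℤ) : dm n i + dr n i * (2 * n) = i := by
  have h := Int.mul_ediv_add_emod (i + n) (2 * n)
  simp only [dm, dr]
  linear_combination h

lemma neg_mem {n : ℕ} {m : ℤ} (hm : m ∈ Isp n) : -m - 1 ∈ Isp n := by
  simp only [Isp, Finset.mem_Icc] at *; omega

lemma decomp_unique {n : ℕ} (hn : 0 < n) {m m' r s : ℤ}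
    (hm : m ∈ Isp n) (hm' : m' ∈ Isp n)
    (h : m + r * (2 * n) = m' + s * (2 * n)) : m = m' ∧ r = s := by
  simp only [Isp, Finset.mem_Icc] at hm hm'
  have hd : (2 * (n : ℤ)) ∣ (m - m') := ⟨s - r, by linear_combination h⟩
  have hn1 : (1 : ℤ) ≤ n := by exact_mod_cast hn
  have h0 : m - m' = 0 := Int.eq_zero_of_abs_lt_dvd hd (by rw [abs_lt]; omega)
  refine ⟨by omega, ?_⟩
  have h2 : (2 * (n : ℤ)) ≠ 0 := by omega
  have : r * (2 * (n : ℤ)) = s * (2 * n) := by omega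
  exact mul_right_cancel₀ h2 this

lemma dm_spec {n : ℕ} (hn : 0 < n) {m : ℤ} (hm : m ∈ Isp n) (r : ℤ) :
    dm n (m + r * (2 * n)) = m ∧ dr n (m + r * (2 * n)) = r :=
  decomp_unique hn (dm_mem hn _) hm (dm_dr n _)

def dEquiv (n : ℕ) (hn : 0 < n) : ({i : ℤ // i ∈ Isp n} × ℤ) ≃ ℤ where
  toFun q := (q.1 : ℤ) + q.2 * (2 * n)
  invFun i := (⟨dm n i, dm_mem hn i⟩, dr n i)
  left_inv q := by
    obtain ⟨⟨m, hm⟩, r⟩ := q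
    have h := dm_spec hn hm r
    simp [Prod.ext_iff, Subtype.ext_iff, h.1, h.2]
  right_inv i := dm_dr n i

end S7

namespace S7
variable {R : Type*} [Ring R]

lemma jmul_support {X : ℤ → ℤ → R} {N : ℤ} (hX : HasBand X N) (Y : ℤ → ℤ → R) (i j : ℤ) :
    (Function.support fun l => X i l * Y l j).Finite := by
  apply Set.Finite.subset (Set.finite_Icc (i - N) (i + N))
  intro l hl
  rw [Set.mem_Icc]
  by_contra hc
  push_neg at hc
  have hb : N < |i - l| := by rw [lt_abs]; omega
  exact hl (show X i l * Y l j = 0 by rw [hX i l hb, zero_mul])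

lemma finsum_decomp {n : ℕ} (hn : 0 < n) (f : ℤ → R) (hf : (Function.support f).Finite) :
    ∑ᶠ l, f l = ∑ p : {i : ℤ // i ∈ Isp n}, ∑ᶠ t : ℤ, f ((p : ℤ) + t * (2 * n)) := by
  rw [← finsum_comp_equiv (dEquiv n hn)]
  have hf2 : (Function.support fun q : {i : ℤ // i ∈ Isp n} × ℤ => f (dEquiv n hn q)).Finite := by
    have : (Function.support fun q : {i : ℤ // i ∈ Isp n} × ℤ => f (dEquiv n hn q))
        ⊆ (dEquiv n hn) ⁻¹' (Function.support f) := fun q hq => hq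
    exact Set.Finite.subset (Set.Finite.preimage ((dEquiv n hn).injective.injOn) hf) this
  rw [finsum_curry _ hf2, finsum_eq_sum_of_fintype]
  rfl

lemma jmul_id_right (Z : ℤ → ℤ → R) : jmul Z idMat = Z := by
  funext i j
  unfold jmul idMat
  rw [finsum_eq_single _ j (fun x hx => by simp [hx])]
  simp

lemma jmul_id_left (Z : ℤ → ℤ → R) : jmul idMat Z = Z := by
  funext i j
  unfold jmul idMat
  rw [finsum_eq_single _ i (fun x hx => by simp [Ne.symm hx])]
  simp

lemma jmul_zero_right (Z : ℤ → ℤ → R) : jmul Z (0 : ℤ → ℤ → R) = 0 := by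
  funext i j; unfold jmul; simp

lemma jmul_zero_left (Z : ℤ → ℤ → R) : jmul (0 : ℤ → ℤ → R) Z = 0 := by
  funext i j; unfold jmul; simp

lemma jmul_neg_right (Z W : ℤ → ℤ → R) : jmul Z (-W) = -(jmul Z W) := by
  funext i j
  unfold jmul
  simp only [Pi.neg_apply, mul_neg]
  rw [finsum_neg_distrib]

lemma jmul_neg_left (Z W : ℤ → ℤ → R) : jmul (-W) Z = -(jmul W Z) := by
  funext i j
  unfold jmul
  simp only [Pi.neg_apply, neg_mul]
  rw [finsum_neg_distrib]

lemma jmul_usmul_id_right (u : ℤˣ) (Z : ℤ → ℤ → R) :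
    jmul Z ((u : ℤ) • idMat) = (u : ℤ) • Z := by
  rcases Int.units_eq_one_or u with h | h <;>
    simp [h, jmul_id_right, jmul_neg_right, neg_smul, one_smul]

lemma jmul_usmul_id_left (u : ℤˣ) (Z : ℤ → ℤ → R) :
    jmul ((u : ℤ) • idMat) Z = (u : ℤ) • Z := by
  rcases Int.units_eq_one_or u with h | h <;>
    simp [h, jmul_id_left, jmul_neg_left, neg_smul, one_smul]

lemma sign_iff (ε γ δ : ℤˣ) (h : (ε : ℤ) * (γ : ℤ) = (δ : ℤ)) (x y : R) :
    ((γ : ℤ) • x = -y) ↔ ((ε : ℤ) • x + (δ : ℤ) • y = 0) := by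
  have hsq : ∀ u : ℤˣ, (u : ℤ) * (u : ℤ) = 1 := fun u => by
    rcases Int.units_eq_one_or u with hu | hu <;> simp [hu]
  constructor
  · intro hh
    have hy : y = -((γ : ℤ) • x) := by rw [hh, neg_neg]
    have hδγ : (δ : ℤ) * (γ : ℤ) = (ε : ℤ) := by
      rw [← h, mul_assoc, hsq, mul_one]
    rw [hy, smul_neg, smul_smul, hδγ]
    exact add_neg_cancel _
  · intro hh
    have hy : (δ : ℤ) • y = -((ε : ℤ) • x) := by
      have := hh
      rw [add_comm] at this
      exact eq_neg_of_add_eq_zero_left this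
    have h2 : y = -(((δ : ℤ) * (ε : ℤ)) • x) := by
      have h3 : (δ : ℤ) • ((δ : ℤ) • y) = (δ : ℤ) • (-((ε : ℤ) • x)) := by rw [hy]
      rw [smul_smul, hsq δ, one_smul, smul_neg, smul_smul] at h3
      exact h3
    have hδε : (δ : ℤ) * (ε : ℤ) = (γ : ℤ) := by
      rw [← h]; rw [mul_comm (ε : ℤ) (γ : ℤ), mul_assoc, hsq, mul_one]
    rw [h2, neg_neg, hδε]

lemma sign_eq {a b : ℤ} (h : Even (a - b)) : a.negOnePow = b.negOnePow :=
  (Int.negOnePow_eq_iff a b).mpr h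

end S7

namespace S7
variable {R : Type*} [Ring R]

lemma matMul_JnC_right {n : ℕ} (A : {i : ℤ // i ∈ Isp n} → {i : ℤ // i ∈ Isp n} → ℤ → ℤ → R)
    (m m' : {i : ℤ // i ∈ Isp n}) :
    matMulSp n A (JnC n) m m'
      = ((-(m' : ℤ) - 1).negOnePow : ℤ) • A m ⟨-(m' : ℤ) - 1, neg_mem m'.2⟩ := by
  unfold matMulSp
  rw [Fintype.sum_eq_single (⟨-(m' : ℤ) - 1, neg_mem m'.2⟩ : {i : ℤ // i ∈ Isp n})]
  · show jmul _ (JnC n ⟨-(m' : ℤ) - 1, neg_mem m'.2⟩ m') = _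
    unfold JnC
    rw [if_pos (show (m' : ℤ) = -((⟨-(m' : ℤ) - 1, neg_mem m'.2⟩ :
      {i : ℤ // i ∈ Isp n}) : ℤ) - 1 by push_cast; ring)]
    exact jmul_usmul_id_right _ _
  · intro p hp
    show jmul _ (JnC n p m') = _
    unfold JnC
    rw [if_neg (fun hc => hp (Subtype.ext (show (p : ℤ) = -(m' : ℤ) - 1 by omega)))]
    exact jmul_zero_right _

lemma matMul_JnC_left {n : ℕ} (A : {i : ℤ // i ∈ Isp n} → {i : ℤ // i ∈ Isp n} → ℤ → ℤ → R)
    (m m' : {i : ℤ // i ∈ Isp n}) :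
    matMulSp n (JnC n) A m m'
      = (((m : ℤ)).negOnePow : ℤ) • A ⟨-(m : ℤ) - 1, neg_mem m.2⟩ m' := by
  unfold matMulSp
  rw [Fintype.sum_eq_single (⟨-(m : ℤ) - 1, neg_mem m.2⟩ : {i : ℤ // i ∈ Isp n})]
  · show jmul (JnC n m ⟨-(m : ℤ) - 1, neg_mem m.2⟩) _ = _
    unfold JnC
    rw [if_pos rfl]
    exact jmul_usmul_id_left _ _
  · intro p hp
    show jmul (JnC n m p) _ = _
    unfold JnC
    rw [if_neg (fun hc => hp (Subtype.ext (show (p : ℤ) = -(m : ℤ) - 1 by omega)))]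
    exact jmul_zero_left _

lemma cond_iff {n : ℕ} (bar : R → R)
    (A : {i : ℤ // i ∈ Isp n} → {i : ℤ // i ∈ Isp n} → ℤ → ℤ → R) :
    (matMulSp n (daggerSp bar n A) (JnC n) + matMulSp n (JnC n) A = 0) ↔
    ∀ (m m' : {i : ℤ // i ∈ Isp n}) (r s : ℤ),
      ((-(m' : ℤ) - 1).negOnePow : ℤ) • bar (A ⟨-(m' : ℤ) - 1, neg_mem m'.2⟩ m (-s) (-r))
        + (((m : ℤ)).negOnePow : ℤ) • A ⟨-(m : ℤ) - 1, neg_mem m.2⟩ m' r s = 0 := by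
  rw [funext_iff]
  refine forall_congr' fun m => ?_
  rw [funext_iff]
  refine forall_congr' fun m' => ?_
  rw [funext_iff]
  constructor
  · intro h r
    have := h r
    rw [funext_iff] at this
    intro s
    have h2 := this s
    simp only [Pi.add_apply, Pi.zero_apply, matMul_JnC_right, matMul_JnC_left,
      Pi.smul_apply, daggerSp, astar] at h2
    exact h2
  · intro h r
    funext s
    simp only [Pi.add_apply, Pi.zero_apply, matMul_JnC_right, matMul_JnC_left,
      Pi.smul_apply, daggerSp, astar]
    exact h r s

end S7

namespace S7
variable {R : Type*} [Ring R]

lemma tau_entry_iff (n : ℕ) (bar : R → R) (X : ℤ → ℤ → R)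
    (m m' : {i : ℤ // i ∈ Isp n}) (r s : ℤ) :
    (tauC bar X (-(m : ℤ) - 1 + r * (2 * n)) ((m' : ℤ) + s * (2 * n))
       = -(X (-(m : ℤ) - 1 + r * (2 * n)) ((m' : ℤ) + s * (2 * n)))) ↔
    ((-(m' : ℤ) - 1).negOnePow : ℤ) •
        bar (PhiSp n X ⟨-(m' : ℤ) - 1, neg_mem m'.2⟩ m (-s) (-r))
      + (((m : ℤ)).negOnePow : ℤ) • PhiSp n X ⟨-(m : ℤ) - 1, neg_mem m.2⟩ m' r s = 0 := by
  have hu : ((-(m' : ℤ) - 1).negOnePow) *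
      (((-(m : ℤ) - 1 + r * (2 * (n : ℤ))) + ((m' : ℤ) + s * (2 * (n : ℤ)))).negOnePow)
      = ((m : ℤ)).negOnePow := by
    rw [← Int.negOnePow_add]
    exact sign_eq ⟨-(m : ℤ) - 1 + (r + s) * n, by ring⟩
  have hsign : (((-(m' : ℤ) - 1).negOnePow : ℤ)) *
      ((((-(m : ℤ) - 1 + r * (2 * (n : ℤ))) + ((m' : ℤ) + s * (2 * (n : ℤ)))).negOnePow : ℤ))
      = (((m : ℤ)).negOnePow : ℤ) := by
    rw [← Units.val_mul, hu]
  unfold tauC PhiSp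
  have e1 : -1 - ((m' : ℤ) + s * (2 * (n : ℤ))) = (-(m' : ℤ) - 1) + (-s) * (2 * n) := by ring
  have e2 : -1 - (-(m : ℤ) - 1 + r * (2 * (n : ℤ))) = (m : ℤ) + (-r) * (2 * n) := by ring
  rw [e1, e2]
  exact sign_iff _ _ _ hsign _ _

lemma tau_iff {n : ℕ} (hn : 0 < n) (bar : R → R) (X : ℤ → ℤ → R) :
    tauC bar X = -X ↔
    ∀ (m m' : {i : ℤ // i ∈ Isp n}) (r s : ℤ),
      ((-(m' : ℤ) - 1).negOnePow : ℤ) •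
          bar (PhiSp n X ⟨-(m' : ℤ) - 1, neg_mem m'.2⟩ m (-s) (-r))
        + (((m : ℤ)).negOnePow : ℤ) • PhiSp n X ⟨-(m : ℤ) - 1, neg_mem m.2⟩ m' r s = 0 := by
  constructor
  · intro h m m' r s
    exact (tau_entry_iff n bar X m m' r s).mp (congrFun (congrFun h _) _)
  · intro h
    funext i j
    show tauC bar X i j = -(X i j)
    have hdi := dm_dr n i
    have hdj := dm_dr n j
    have hi : i = -(((⟨-(dm n i) - 1, neg_mem (dm_mem hn i)⟩ :
        {i : ℤ // i ∈ Isp n}) : ℤ)) - 1 + (dr n i) * (2 * n) := by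
      show i = -(-(dm n i) - 1) - 1 + (dr n i) * (2 * (n : ℤ))
      linarith [hdi]
    have hj : j = ((⟨dm n j, dm_mem hn j⟩ : {i : ℤ // i ∈ Isp n}) : ℤ)
        + (dr n j) * (2 * n) := hdj.symm
    rw [hi, hj]
    exact (tau_entry_iff n bar X _ _ (dr n i) (dr n j)).mpr (h _ _ _ _)

end S7

namespace S7
variable {R : Type*} [Ring R]

lemma hom_mul {n : ℕ} (hn : 0 < n) {X Y : ℤ → ℤ → R} {N : ℤ} (hX : HasBand X N)
    (m m' : {i : ℤ // i ∈ Isp n}) (r s : ℤ) :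
    jmul X Y ((m : ℤ) + r * (2 * n)) ((m' : ℤ) + s * (2 * n))
      = matMulSp n (PhiSp n X) (PhiSp n Y) m m' r s := by
  unfold jmul matMulSp
  rw [finsum_decomp hn _ (jmul_support hX Y _ _)]
  rw [Finset.sum_apply, Finset.sum_apply]
  exact Finset.sum_congr rfl fun p _ => rfl

end S7

theorem statement7 (k R : Type*) [Field k] [CharZero k] [Ring R] [Algebra k R]
    (bar : R →ₗ[k] R) (hbar_mul : ∀ r s : R, bar (r * s) = bar s * bar r)
    (hbar_inv : ∀ r : R, bar (bar r) = r) (n : ℕ) (hn : 1 < n) :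
    -- well-definedness: entries of `Φ(X)` lie in `J(R)`
    (∀ X : ℤ → ℤ → R, IsJacobi X →
      ∀ m m' : {i : ℤ // i ∈ Isp n}, IsJacobi (PhiSp n X m m')) ∧
    -- `Φ` maps `sp_J(R)` exactly onto `sp_{2n}(J(R))`
    (∀ X : ℤ → ℤ → R, IsJacobi X →
      (tauC (⇑bar) X = -X ↔
        matMulSp n (daggerSp (⇑bar) n (PhiSp n X)) (JnC n) +
          matMulSp n (JnC n) (PhiSp n X) = 0)) ∧
    -- `Φ` is a homomorphism of Lie algebras
    (∀ X Y : ℤ → ℤ → R, IsJacobi X → IsJacobi Y →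
      PhiSp n (lieB X Y) =
        matMulSp n (PhiSp n X) (PhiSp n Y) - matMulSp n (PhiSp n Y) (PhiSp n X)) ∧
    -- injectivity on `sp_J(R)`
    (∀ X Y : ℤ → ℤ → R, IsJacobi X → IsJacobi Y → tauC (⇑bar) X = -X →
      tauC (⇑bar) Y = -Y → PhiSp n X = PhiSp n Y → X = Y) ∧
    -- surjectivity onto `sp_{2n}(J(R))`
    (∀ A : {i : ℤ // i ∈ Isp n} → {i : ℤ // i ∈ Isp n} → ℤ → ℤ → R,
      (∀ m m', IsJacobi (A m m')) →
      matMulSp n (daggerSp (⇑bar) n A) (JnC n) + matMulSp n (JnC n) A = 0 →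
      ∃ X : ℤ → ℤ → R, IsJacobi X ∧ tauC (⇑bar) X = -X ∧ PhiSp n X = A) := by
  have hn0 : 0 < n := by omega
  have hn1 : (1 : ℤ) ≤ n := by exact_mod_cast hn0
  -- Part 1
  have part1 : ∀ X : ℤ → ℤ → R, IsJacobi X →
      ∀ m m' : {i : ℤ // i ∈ Isp n}, IsJacobi (PhiSp n X m m') := by
    rintro X ⟨N, hX⟩ m m'
    refine ⟨|N|, fun r s hrs => ?_⟩
    have hm := m.2
    have hm' := m'.2
    simp only [Isp, Finset.mem_Icc] at hm hm'
    apply hX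
    have key : |r - s| * (2 * (n : ℤ)) ≤
        |((m : ℤ) + r * (2 * n)) - ((m' : ℤ) + s * (2 * n))| + |(m : ℤ) - (m' : ℤ)| := by
      have h1 : (r - s) * (2 * (n : ℤ)) =
          (((m : ℤ) + r * (2 * n)) - ((m' : ℤ) + s * (2 * n))) + (-((m : ℤ) - (m' : ℤ))) := by
        ring
      calc |r - s| * (2 * (n : ℤ)) = |(r - s) * (2 * (n : ℤ))| := by
            rw [abs_mul, abs_of_nonneg (by positivity : (0:ℤ) ≤ 2 * (n:ℤ))]
        _ ≤ _ := by rw [h1]; exact (abs_add_le _ _).trans (by rw [abs_neg])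
    have hmm' : |(m : ℤ) - (m' : ℤ)| ≤ 2 * (n : ℤ) - 1 := by rw [abs_le]; omega
    have hrs' : |N| + 1 ≤ |r - s| := hrs
    have hmul : (|N| + 1) * (2 * (n : ℤ)) ≤ |r - s| * (2 * n) :=
      mul_le_mul_of_nonneg_right hrs' (by positivity)
    have hNn : |N| * 1 ≤ |N| * (2 * (n : ℤ)) :=
      mul_le_mul_of_nonneg_left (by omega) (abs_nonneg N)
    have hN : N ≤ |N| := le_abs_self N
    nlinarith [abs_nonneg (((m : ℤ) + r * (2 * n)) - ((m' : ℤ) + s * (2 * n)))]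
  -- Part 2
  have part2 : ∀ X : ℤ → ℤ → R, tauC (⇑bar) X = -X ↔
      matMulSp n (daggerSp (⇑bar) n (PhiSp n X)) (JnC n) +
        matMulSp n (JnC n) (PhiSp n X) = 0 := fun X =>
    (S7.tau_iff hn0 (⇑bar) X).trans (S7.cond_iff (⇑bar) (PhiSp n X)).symm
  refine ⟨part1, fun X _ => part2 X, ?_, ?_, ?_⟩
  -- Part 3
  · rintro X Y ⟨NX, hX⟩ ⟨NY, hY⟩
    funext m m' r s
    show lieB X Y ((m : ℤ) + r * (2 * n)) ((m' : ℤ) + s * (2 * n)) = _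
    simp only [lieB, Pi.sub_apply]
    rw [S7.hom_mul hn0 hX m m' r s, S7.hom_mul hn0 hY m m' r s]
  -- Part 4
  · intro X Y _ _ _ _ h
    funext i j
    have h1 := congrFun (congrFun (congrFun (congrFun h
      ⟨S7.dm n i, S7.dm_mem hn0 i⟩) ⟨S7.dm n j, S7.dm_mem hn0 j⟩) (S7.dr n i)) (S7.dr n j)
    simpa only [PhiSp, S7.dm_dr] using h1
  -- Part 5
  · intro A hA hcond
    classical
    choose f hf using hA
    set N0 : ℤ := ((Finset.univ.sup (fun p : {i : ℤ // i ∈ Isp n} × {i : ℤ // i ∈ Isp n} =>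
      (f p.1 p.2).toNat) : ℕ) : ℤ) with hN0
    have hband : ∀ m m', HasBand (A m m') N0 := by
      intro m m' i j hij
      apply hf m m' i j
      have h1 : f m m' ≤ ((f m m').toNat : ℤ) := Int.self_le_toNat _
      have h2 : ((f m m').toNat : ℤ) ≤ N0 := by
        rw [hN0]
        have := Finset.le_sup (f := fun p : {i : ℤ // i ∈ Isp n} × {i : ℤ // i ∈ Isp n} =>
          (f p.1 p.2).toNat) (Finset.mem_univ (m, m'))
        exact_mod_cast this
      omega
    refine ⟨fun i j => A ⟨S7.dm n i, S7.dm_mem hn0 i⟩ ⟨S7.dm n j, S7.dm_mem hn0 j⟩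
      (S7.dr n i) (S7.dr n j), ?_, ?_, ?_⟩
    · refine ⟨2 * n * N0 + 2 * n, fun i j hij => ?_⟩
      apply hband
      by_contra hc
      push_neg at hc
      have hdi := S7.dm_dr n i
      have hdj := S7.dm_dr n j
      have hmi := S7.dm_mem hn0 i
      have hmj := S7.dm_mem hn0 j
      simp only [Isp, Finset.mem_Icc] at hmi hmj
      have hij2 : |i - j| ≤ |S7.dm n i - S7.dm n j| + |S7.dr n i - S7.dr n j| * (2 * (n:ℤ)) := by
        have h1 : i - j = (S7.dm n i - S7.dm n j) + (S7.dr n i - S7.dr n j) * (2 * (n:ℤ)) := by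
          linarith [hdi, hdj]
        rw [h1]
        refine (abs_add_le _ _).trans (by
          rw [abs_mul, abs_of_nonneg (by positivity : (0:ℤ) ≤ 2 * (n:ℤ))])
      have hd1 : |S7.dm n i - S7.dm n j| ≤ 2 * (n : ℤ) - 1 := by rw [abs_le]; omega
      have hd2 : |S7.dr n i - S7.dr n j| * (2 * (n:ℤ)) ≤ N0 * (2 * n) :=
        mul_le_mul_of_nonneg_right hc (by positivity)
      nlinarith
    · rw [part2]
      have hPhi : PhiSp n (fun i j => A ⟨S7.dm n i, S7.dm_mem hn0 i⟩ ⟨S7.dm n j, S7.dm_mem hn0 j⟩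
          (S7.dr n i) (S7.dr n j)) = A := by
        funext m m' r s
        have h1 := S7.dm_spec hn0 m.2 r
        have h2 := S7.dm_spec hn0 m'.2 s
        simp only [PhiSp]
        have e1 : (⟨S7.dm n ((m : ℤ) + r * (2 * n)),
            S7.dm_mem hn0 ((m : ℤ) + r * (2 * n))⟩ : {i : ℤ // i ∈ Isp n}) = m :=
          Subtype.ext h1.1
        have e2 : (⟨S7.dm n ((m' : ℤ) + s * (2 * n)),
            S7.dm_mem hn0 ((m' : ℤ) + s * (2 * n))⟩ : {i : ℤ // i ∈ Isp n}) = m' :=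
          Subtype.ext h2.1
        rw [e1, e2, h1.2, h2.2]
      rw [hPhi]
      exact hcond
    · funext m m' r s
      have h1 := S7.dm_spec hn0 m.2 r
      have h2 := S7.dm_spec hn0 m'.2 s
      simp only [PhiSp]
      have e1 : (⟨S7.dm n ((m : ℤ) + r * (2 * n)),
          S7.dm_mem hn0 ((m : ℤ) + r * (2 * n))⟩ : {i : ℤ // i ∈ Isp n}) = m :=
        Subtype.ext h1.1
      have e2 : (⟨S7.dm n ((m' : ℤ) + s * (2 * n)),
          S7.dm_mem hn0 ((m' : ℤ) + s * (2 * n))⟩ : {i : ℤ // i ∈ Isp n}) = m' :=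
        Subtype.ext h2.1
      rw [e1, e2, h1.2, h2.2]
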